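/- For every positive integer n, M(2n+1) ≥ 2·M(n)·M(n+1). -/

import Mathlib

/-- A finite sequence (list) of naturals contains a 3-term arithmetic progression
as a subsequence: there are indices `i < j < k` with `a i + a k = 2 * a j`,
equivalently some sublist `[x, y, z]` with `x + z = 2 * y`. -/
def Has3AP (l : List ℕ) : Prop :=
  ∃ x y z : ℕ, [x, y, z].Sublist l ∧ x + z = 2 * y

/-- `M n` is the number of 3AP-free permutations of `{1, 2, ..., n}`. -/
noncomputable def M (n : ℕ) : ℕ :=
  Nat.card {l : List ℕ // l.Perm (List.range' 1 n) ∧ ¬ Has3AP l}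


namespace AP3Aux

/-- doubling map -/
def ev (l : List ℕ) : List ℕ := l.map (fun k => 2 * k)
/-- to-odd map -/
def od (l : List ℕ) : List ℕ := l.map (fun k => 2 * k - 1)

lemma ev_inj : Function.Injective (fun k : ℕ => 2 * k) := fun a b h => by
  simp only at h; omega

lemma od_inj : Function.Injective (fun k : ℕ => 2 * k - 1) := fun a b h => by
  simp only at h; omega

lemma mem_ev {l : List ℕ} {x : ℕ} : x ∈ ev l ↔ ∃ k ∈ l, x = 2 * k := by
  simp [ev, eq_comm]

lemma mem_od {l : List ℕ} {x : ℕ} : x ∈ od l ↔ ∃ k ∈ l, x = 2 * k - 1 := by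
  simp [od, eq_comm]

lemma pos_of_perm {l : List ℕ} {m : ℕ} (h : l.Perm (List.range' 1 m)) :
    ∀ x ∈ l, 1 ≤ x := by
  intro x hx
  have := (h.mem_iff).1 hx
  exact (List.mem_range'_1.1 this).1

lemma not_has3AP_ev {l : List ℕ} (h : ¬ Has3AP l) : ¬ Has3AP (ev l) := by
  intro ⟨x, y, z, hs, he⟩
  obtain ⟨l', hl', heq⟩ := List.sublist_map_iff.1 hs
  match l', heq with
  | [p, q, r], heq =>
    simp only [List.map_cons, List.map_nil, List.cons.injEq] at heq
    obtain ⟨hx, hy, hz, -⟩ := heq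
    exact h ⟨p, q, r, hl', by omega⟩

lemma not_has3AP_od {l : List ℕ} (hpos : ∀ x ∈ l, 1 ≤ x) (h : ¬ Has3AP l) :
    ¬ Has3AP (od l) := by
  intro ⟨x, y, z, hs, he⟩
  obtain ⟨l', hl', heq⟩ := List.sublist_map_iff.1 hs
  match l', heq with
  | [p, q, r], heq =>
    simp only [List.map_cons, List.map_nil, List.cons.injEq] at heq
    obtain ⟨hx, hy, hz, -⟩ := heq
    have hp : 1 ≤ p := hpos p (hl'.mem (by simp))
    have hq : 1 ≤ q := hpos q (hl'.mem (by simp))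
    have hr : 1 ≤ r := hpos r (hl'.mem (by simp))
    exact h ⟨p, q, r, hl', by omega⟩

lemma even_of_mem_ev {l : List ℕ} {x : ℕ} (hx : x ∈ ev l) : x % 2 = 0 := by
  obtain ⟨k, -, rfl⟩ := mem_ev.1 hx; omega

lemma odd_of_mem_od {l : List ℕ} (hpos : ∀ x ∈ l, 1 ≤ x) {x : ℕ} (hx : x ∈ od l) :
    x % 2 = 1 := by
  obtain ⟨k, hk, rfl⟩ := mem_od.1 hx
  have := hpos k hk; omega

/-- No 3AP in a concatenation of an all-even block and an all-odd block
(in either order), provided each block is 3AP-free. -/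
lemma not_has3AP_append {u v : List ℕ} {pu pv : ℕ} (hne : pu ≠ pv)
    (hu : ∀ x ∈ u, x % 2 = pu) (hv : ∀ x ∈ v, x % 2 = pv)
    (h1 : ¬ Has3AP u) (h2 : ¬ Has3AP v) : ¬ Has3AP (u ++ v) := by
  intro ⟨x, y, z, hs, he⟩
  obtain ⟨s, t, heq, hsu, htv⟩ := List.sublist_append_iff.1 hs
  match s, t, heq with
  | [], t, heq =>
    subst heq
    exact h2 ⟨x, y, z, by simpa using htv, he⟩
  | [a], t, heq =>
    injection heq with h1 h2
    subst h1; subst h2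
    have hx' : x % 2 = pu := hu x (hsu.mem (by simp))
    have hy' : y % 2 = pv := hv y (htv.mem (by simp))
    have hz' : z % 2 = pv := hv z (htv.mem (by simp))
    omega
  | [a, b], t, heq =>
    injection heq with h1 heq'; injection heq' with h2 h3
    subst h1; subst h2; subst h3
    have hx' : x % 2 = pu := hu x (hsu.mem (by simp))
    have hy' : y % 2 = pu := hu y (hsu.mem (by simp))
    have hz' : z % 2 = pv := hv z (htv.mem (by simp))
    omega
  | [a, b, c], t, heq =>
    injection heq with e1 heq'; injection heq' with e2 heq''
    injection heq'' with e3 e4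
    subst e1; subst e2; subst e3
    exact h1 ⟨x, y, z, hsu, he⟩
  | a :: b :: c :: d :: t', t, heq =>
    simpa using congrArg List.length heq

lemma perm_append {n : ℕ} {a b : List ℕ}
    (ha : a.Perm (List.range' 1 n)) (hb : b.Perm (List.range' 1 (n + 1))) :
    (ev a ++ od b).Perm (List.range' 1 (2 * n + 1)) := by
  have hna : a.Nodup := ha.nodup_iff.2 List.nodup_range'
  have hnb : b.Nodup := hb.nodup_iff.2 List.nodup_range'
  have hposb := pos_of_perm hb
  have hnodup : (ev a ++ od b).Nodup := by
    refine List.Nodup.append ?_ ?_ ?_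
    · exact hna.map ev_inj
    · exact hnb.map od_inj
    · intro x hx hx'
      have := even_of_mem_ev hx
      have := odd_of_mem_od hposb hx'
      omega
  rw [List.perm_ext_iff_of_nodup hnodup (List.nodup_range' (s := 1) (n := 2 * n + 1))]
  intro x
  rw [List.mem_append, List.mem_range'_1, mem_ev, mem_od]
  constructor
  · rintro (⟨k, hk, rfl⟩ | ⟨k, hk, rfl⟩)
    · have := List.mem_range'_1.1 (ha.mem_iff.1 hk); omega
    · have := List.mem_range'_1.1 (hb.mem_iff.1 hk); omega
  · rintro ⟨h1, h2⟩
    rcases Nat.even_or_odd x with ⟨k, hk⟩ | ⟨k, hk⟩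
    · left
      refine ⟨k, ha.mem_iff.2 (List.mem_range'_1.2 (by omega)), by omega⟩
    · right
      refine ⟨k + 1, hb.mem_iff.2 (List.mem_range'_1.2 (by omega)), by omega⟩

end AP3Aux


open AP3Aux in
/-- For every positive integer `n`, `M (2n+1) ≥ 2 * M n * M (n+1)`. -/
theorem M_two_mul_add_one (n : ℕ) (hn : 0 < n) :
    2 * M n * M (n + 1) ≤ M (2 * n + 1) := by
  classical
  set A := {l : List ℕ // l.Perm (List.range' 1 n) ∧ ¬ Has3AP l}
  set B := {l : List ℕ // l.Perm (List.range' 1 (n + 1)) ∧ ¬ Has3AP l}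
  set C := {l : List ℕ // l.Perm (List.range' 1 (2 * n + 1)) ∧ ¬ Has3AP l}
  have hfin : Finite C := by
    have : {l : List ℕ | l.Perm (List.range' 1 (2 * n + 1)) ∧ ¬ Has3AP l}.Finite := by
      apply Set.Finite.subset (List.range' 1 (2 * n + 1)).permutations.finite_toSet
      intro l hl
      exact List.mem_permutations.2 hl.1
    exact this.to_subtype
  -- build the map
  have key : ∀ (c : Bool) (a : A) (b : B),
      ((if c then od b.1 ++ ev a.1 else ev a.1 ++ od b.1).Perm
          (List.range' 1 (2 * n + 1)) ∧
        ¬ Has3AP (if c then od b.1 ++ ev a.1 else ev a.1 ++ od b.1)) := by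
    rintro c ⟨a, ha, ha3⟩ ⟨b, hb, hb3⟩
    have hposb := pos_of_perm hb
    have hperm := perm_append ha hb
    have hev : ∀ x ∈ ev a, x % 2 = 0 := fun x hx => even_of_mem_ev hx
    have hod : ∀ x ∈ od b, x % 2 = 1 := fun x hx => odd_of_mem_od hposb hx
    have h3a := not_has3AP_ev ha3
    have h3b := not_has3AP_od hposb hb3
    cases c with
    | false =>
      dsimp only
      exact ⟨hperm, not_has3AP_append (by omega) hev hod h3a h3b⟩
    | true =>
      dsimp only
      refine ⟨(List.perm_append_comm).trans hperm, ?_⟩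
      exact not_has3AP_append (by omega) hod hev h3b h3a
  let F : Bool × A × B → C := fun p =>
    ⟨if p.1 then od p.2.2.1 ++ ev p.2.1.1 else ev p.2.1.1 ++ od p.2.2.1,
      key p.1 p.2.1 p.2.2⟩
  have hFinj : Function.Injective F := by
    intro p q hpq
    obtain ⟨c1, ⟨a1, ha1, ha1'⟩, ⟨b1, hb1, hb1'⟩⟩ := p
    obtain ⟨c2, ⟨a2, ha2, ha2'⟩, ⟨b2, hb2, hb2'⟩⟩ := q
    have hval := congrArg Subtype.val hpq
    simp only [F] at hval
    have hla1 : a1.length = n := ha1.length_eq.trans List.length_range'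
    have hla2 : a2.length = n := ha2.length_eq.trans List.length_range'
    have hlb1 : b1.length = n + 1 := hb1.length_eq.trans List.length_range'
    have hlb2 : b2.length = n + 1 := hb2.length_eq.trans List.length_range'
    have hposb1 := pos_of_perm hb1
    have hposb2 := pos_of_perm hb2
    -- first, c1 = c2
    have hcc : c1 = c2 := by
      by_contra hne
      -- heads have different parity
      have hmix : (od b1 ++ ev a1 = ev a2 ++ od b2) ∨ (ev a1 ++ od b1 = od b2 ++ ev a2) := by
        cases c1 <;> cases c2 <;> simp_all
      rcases hmix with hm | hm
      · obtain ⟨p, b1', rfl⟩ := List.exists_cons_of_ne_nil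
          (show b1 ≠ [] from fun hE => by rw [hE] at hlb1; simp at hlb1)
        obtain ⟨q, a2', rfl⟩ := List.exists_cons_of_ne_nil
          (show a2 ≠ [] from fun hE => by rw [hE] at hla2; simp at hla2; omega)
        have hp : 1 ≤ p := hposb1 p (by simp)
        have : 2 * p - 1 = 2 * q := by
          have := congrArg (fun l => l.head?) hm
          simpa [od, ev] using this
        omega
      · obtain ⟨p, a1', rfl⟩ := List.exists_cons_of_ne_nil
          (show a1 ≠ [] from fun hE => by rw [hE] at hla1; simp at hla1; omega)
        obtain ⟨q, b2', rfl⟩ := List.exists_cons_of_ne_nil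
          (show b2 ≠ [] from fun hE => by rw [hE] at hlb2; simp at hlb2)
        have hq : 1 ≤ q := hposb2 q (by simp)
        have : 2 * p = 2 * q - 1 := by
          have := congrArg (fun l => l.head?) hm
          simpa [od, ev] using this
        omega
    subst hcc
    have hsame : ev a1 = ev a2 ∧ od b1 = od b2 := by
      cases c1 with
      | false =>
        have hval' : ev a1 ++ od b1 = ev a2 ++ od b2 := by simpa using hval
        exact List.append_inj hval' (by simp [ev, hla1, hla2])
      | true =>
        have hval' : od b1 ++ ev a1 = od b2 ++ ev a2 := by simpa using hval
        have := List.append_inj hval' (by simp [od, hlb1, hlb2])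
        exact ⟨this.2, this.1⟩
    have ha : a1 = a2 := List.map_injective_iff.2 ev_inj hsame.1
    have hb : b1 = b2 := List.map_injective_iff.2 od_inj hsame.2
    subst ha; subst hb; rfl
  have := Nat.card_le_card_of_injective F hFinj
  have hA : M n = Nat.card A := rfl
  have hB : M (n + 1) = Nat.card B := rfl
  calc 2 * M n * M (n + 1) = Nat.card (Bool × A × B) := by
        rw [Nat.card_prod, Nat.card_prod, Nat.card_eq_fintype_card (α := Bool),
          Fintype.card_bool, hA, hB]
        ring
    _ ≤ Nat.card C := this
    _ = M (2 * n + 1) := rfl
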